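/- For 1 ≤ k ≤ n, the number of permutations π of {1,...,n} such that {k} is a dominating set of the permutation graph G_π is exactly (n-k)!·(k-1)!. -/

import Mathlib

/-- The permutation graph of `π`: vertices `0,…,n-1` (0-indexed version of `1,…,n`),
with `i < j` adjacent iff `π⁻¹ i > π⁻¹ j`. -/
def permGraph {n : ℕ} (π : Equiv.Perm (Fin n)) : SimpleGraph (Fin n) where
  Adj i j := (i < j ∧ π.symm j < π.symm i) ∨ (j < i ∧ π.symm i < π.symm j)
  symm := ⟨by intro i j h; tauto⟩
  loopless := ⟨by intro i h; rcases h with ⟨h, _⟩ | ⟨h, _⟩ <;> exact lt_irrefl i h⟩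

/-- `D` dominates `G`: every vertex is in `D` or adjacent to an element of `D`. -/
def Dominates {V : Type*} (G : SimpleGraph V) (D : Set V) : Prop :=
  ∀ v, v ∈ D ∨ ∃ d ∈ D, G.Adj v d

/-- The domination number: minimum cardinality of a dominating set. -/
noncomputable def domNumber {V : Type*} [Fintype V] (G : SimpleGraph V) : ℕ :=
  sInf {k | ∃ D : Finset V, D.card = k ∧ Dominates G ↑D}

/-- Closed neighborhood `N[x]`. -/
def closedNbhd {V : Type*} (G : SimpleGraph V) (x : V) : Set V :=
  {y | y = x ∨ G.Adj x y}

/-- Degree of a vertex. -/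
noncomputable def deg {V : Type*} (G : SimpleGraph V) (v : V) : ℕ :=
  (G.neighborSet v).ncard

section Aux

open Equiv Finset

variable {n : ℕ} (k : Fin n)

/-- The dominance of `{k}` rephrased via `ρ = rev ∘ π⁻¹`. -/
lemma dom_iff (π : Equiv.Perm (Fin n)) :
    Dominates (permGraph π) {k} ↔
      ((π.symm.trans Fin.revPerm) k = k ∧ ∀ v, v < k ↔ (π.symm.trans Fin.revPerm) v < k) := by
  set ρ : Equiv.Perm (Fin n) := π.symm.trans Fin.revPerm with hρ
  have hρv : ∀ v, ρ v = Fin.rev (π.symm v) := fun v => rfl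
  -- Step 1 : dominance ↔ ∀ v, v < k ↔ ρ v < ρ k
  have step1 : Dominates (permGraph π) {k} ↔ ∀ v, v < k ↔ ρ v < ρ k := by
    have hlt : ∀ a b : Fin n, (ρ a < ρ b ↔ π.symm b < π.symm a) := by
      intro a b; rw [hρv, hρv, Fin.rev_lt_rev]
    constructor
    · intro hD v
      rcases hD v with hv | ⟨d, hd, hadj⟩
      · simp only [Set.mem_singleton_iff] at hv
        rw [hv]
        simp [lt_irrefl]
      · simp only [Set.mem_singleton_iff] at hd
        rw [hd] at hadj
        rcases hadj with ⟨h1, h2⟩ | ⟨h1, h2⟩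
        · simp only [h1, true_iff]
          exact (hlt v k).mpr h2
        · constructor
          · intro hvk; exact absurd hvk (asymm h1)
          · intro hc; exact absurd ((hlt v k).mp hc) (asymm h2)
    · intro h v
      rcases lt_trichotomy v k with hvk | hvk | hvk
      · exact Or.inr ⟨k, rfl, Or.inl ⟨hvk, (hlt v k).mp ((h v).mp hvk)⟩⟩
      · exact Or.inl (by simp [hvk])
      · refine Or.inr ⟨k, rfl, Or.inr ⟨hvk, ?_⟩⟩
        have h1 : ¬ ρ v < ρ k := fun hc => absurd ((h v).mpr hc) (asymm hvk)
        have h2 : ρ v ≠ ρ k := fun hc => absurd (ρ.injective hc) (ne_of_gt hvk)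
        have : ρ k < ρ v := lt_of_le_of_ne (le_of_not_gt h1) (Ne.symm h2)
        exact (hlt k v).mp this
  rw [step1]
  constructor
  · intro h
    -- counting argument gives ρ k = k
    have hIio : (Finset.Iio k).card ≤ (Finset.Iio (ρ k)).card := by
      apply Finset.card_le_card_of_injOn ρ
      · intro v hv
        simp only [Finset.mem_coe, Finset.mem_Iio] at *
        exact (h v).mp hv
      · exact ρ.injective.injOn
    have hIoi : (Finset.Ioi k).card ≤ (Finset.Ioi (ρ k)).card := by
      apply Finset.card_le_card_of_injOn ρ
      · intro v hv
        simp only [Finset.mem_coe, Finset.mem_Ioi] at *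
        have h1 : ¬ ρ v < ρ k := fun hc => absurd ((h v).mpr hc) (asymm hv)
        have h2 : ρ v ≠ ρ k := fun hc => absurd (ρ.injective hc) (ne_of_gt hv)
        exact lt_of_le_of_ne (le_of_not_gt h1) (Ne.symm h2)
      · exact ρ.injective.injOn
    simp only [Fin.card_Iio, Fin.card_Ioi] at hIio hIoi
    have hk : (k : ℕ) < n := k.isLt
    have hρk : ((ρ k : Fin n) : ℕ) < n := (ρ k).isLt
    have hval : ((ρ k : Fin n) : ℕ) = (k : ℕ) := by omega
    have hkk : ρ k = k := Fin.ext hval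
    refine ⟨hkk, fun v => ?_⟩
    rw [h v, hkk]
  · rintro ⟨hkk, h⟩ v
    rw [hkk]; exact h v

lemma gt_iff_of_mem {ρ : Equiv.Perm (Fin n)} (hk : ρ k = k)
    (h : ∀ v, v < k ↔ ρ v < k) : ∀ v, k < v ↔ k < ρ v := by
  intro v
  constructor
  · intro hv
    have h1 : ¬ ρ v < k := fun hc => absurd ((h v).mpr hc) (asymm hv)
    have h2 : ρ v ≠ k := fun hc => absurd (ρ.injective (hc.trans hk.symm)) (ne_of_gt hv)
    exact lt_of_le_of_ne (le_of_not_gt h1) (Ne.symm h2)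
  · intro hv
    have h1 : ¬ v < k := fun hc => absurd ((h v).mp hc) (asymm hv)
    have h2 : v ≠ k := fun hc => by rw [hc, hk] at hv; exact lt_irrefl k hv
    exact lt_of_le_of_ne (le_of_not_gt h1) (Ne.symm h2)

/-- Perms fixing `k` and preserving `{v < k}` biject with pairs of perms of the blocks. -/
def blockEquiv :
    {ρ : Equiv.Perm (Fin n) // ρ k = k ∧ ∀ v, v < k ↔ ρ v < k} ≃
      Equiv.Perm {v : Fin n // v < k} × Equiv.Perm {v : Fin n // k < v} where
  toFun ρ := ⟨ρ.1.subtypePerm (fun v => (ρ.2.2 v).symm), ρ.1.subtypePerm (fun v => (gt_iff_of_mem k ρ.2.1 ρ.2.2 v).symm)⟩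
  invFun ab :=
    ⟨Equiv.Perm.ofSubtype ab.1 * Equiv.Perm.ofSubtype ab.2, by
      obtain ⟨a, b⟩ := ab
      simp only [Equiv.Perm.mul_apply]
      constructor
      · rw [Equiv.Perm.ofSubtype_apply_of_not_mem b (lt_irrefl k),
          Equiv.Perm.ofSubtype_apply_of_not_mem a (lt_irrefl k)]
      · intro v
        rcases lt_trichotomy v k with hv | hv | hv
        · rw [Equiv.Perm.ofSubtype_apply_of_not_mem b (asymm hv),
            Equiv.Perm.ofSubtype_apply_of_mem a hv]
          simpa [hv] using (a ⟨v, hv⟩).2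
        · rw [hv, Equiv.Perm.ofSubtype_apply_of_not_mem b (lt_irrefl k),
            Equiv.Perm.ofSubtype_apply_of_not_mem a (lt_irrefl k)]
        · rw [Equiv.Perm.ofSubtype_apply_of_mem b hv,
            Equiv.Perm.ofSubtype_apply_of_not_mem a (asymm (b ⟨v, hv⟩).2)]
          simp only [asymm hv, false_iff]
          exact asymm (b ⟨v, hv⟩).2⟩
  left_inv := by
    rintro ⟨ρ, hk, h⟩
    refine Subtype.ext (Equiv.ext fun v => ?_)
    simp only [Equiv.Perm.mul_apply]
    rcases lt_trichotomy v k with hv | hv | hv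
    · rw [Equiv.Perm.ofSubtype_subtypePerm_of_not_mem (p := fun x => k < x)
        (fun v => (gt_iff_of_mem k hk h v).symm) (asymm hv)]
      exact Equiv.Perm.ofSubtype_subtypePerm_of_mem (p := fun x => x < k) (fun v => (h v).symm) hv
    · rw [hv, Equiv.Perm.ofSubtype_subtypePerm_of_not_mem (p := fun x => k < x)
        (fun v => (gt_iff_of_mem k hk h v).symm) (lt_irrefl k),
        Equiv.Perm.ofSubtype_subtypePerm_of_not_mem (p := fun x => x < k) (fun v => (h v).symm) (lt_irrefl k), hk]
    · rw [Equiv.Perm.ofSubtype_subtypePerm_of_mem (p := fun x => k < x)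
        (fun v => (gt_iff_of_mem k hk h v).symm) hv]
      have h1 : ¬ ρ v < k := fun hc => absurd ((h v).mpr hc) (asymm hv)
      exact Equiv.Perm.ofSubtype_subtypePerm_of_not_mem (p := fun x => x < k) (fun v => (h v).symm) h1
  right_inv := by
    rintro ⟨a, b⟩
    refine Prod.ext (Equiv.ext fun v => Subtype.ext ?_) (Equiv.ext fun v => Subtype.ext ?_)
    · show (Equiv.Perm.ofSubtype a * Equiv.Perm.ofSubtype b) (v : Fin n) = ((a v : Fin n))
      rw [Equiv.Perm.mul_apply, Equiv.Perm.ofSubtype_apply_of_not_mem b (asymm v.2),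
        Equiv.Perm.ofSubtype_apply_of_mem a v.2]
    · show (Equiv.Perm.ofSubtype a * Equiv.Perm.ofSubtype b) (v : Fin n) = ((b v : Fin n))
      rw [Equiv.Perm.mul_apply, Equiv.Perm.ofSubtype_apply_of_mem b v.2,
        Equiv.Perm.ofSubtype_apply_of_not_mem a (asymm (b ⟨(v : Fin n), v.2⟩).2)]

end Aux

theorem count_singleton_dominating {n : ℕ} (k : Fin n) :
    Nat.card {π : Equiv.Perm (Fin n) // Dominates (permGraph π) {k}} =
      (n - 1 - (k : ℕ)).factorial * (k : ℕ).factorial := by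
  classical
  have e1 : {π : Equiv.Perm (Fin n) // Dominates (permGraph π) {k}} ≃
      {ρ : Equiv.Perm (Fin n) // ρ k = k ∧ ∀ v, v < k ↔ ρ v < k} :=
    Equiv.subtypeEquiv ((Equiv.inv (Equiv.Perm (Fin n))).trans (Equiv.mulLeft Fin.revPerm))
      (fun π => dom_iff k π)
  have e2 := blockEquiv k
  rw [Nat.card_congr (e1.trans e2), Nat.card_prod]
  have c1 : Nat.card (Equiv.Perm {v : Fin n // v < k}) = (k : ℕ).factorial := by
    rw [Nat.card_eq_fintype_card, Fintype.card_perm]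
    congr 1
    have h : Fintype.card {v : Fin n // v < k} = Fintype.card (Set.Iio k) :=
      Fintype.card_congr (Equiv.subtypeEquivRight (fun v => by simp))
    rw [h, Fintype.card_Iio, Fin.card_Iio]
  have c2 : Nat.card (Equiv.Perm {v : Fin n // k < v}) = (n - 1 - (k : ℕ)).factorial := by
    rw [Nat.card_eq_fintype_card, Fintype.card_perm]
    congr 1
    have h : Fintype.card {v : Fin n // k < v} = Fintype.card (Set.Ioi k) :=
      Fintype.card_congr (Equiv.subtypeEquivRight (fun v => by simp))
    rw [h, Fintype.card_Ioi, Fin.card_Ioi]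
  rw [c1, c2, Nat.mul_comm]
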